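/- Let H be a densely defined self-adjoint operator on ℋ with unitary group U(t) = e^{−itH}, and let A be a Hilbert–Schmidt operator such that A maps ℋ into Dom H and both HA and HA* are (everywhere-defined) Hilbert–Schmidt operators. Then A ∈ Dom 𝐇, and 𝐇A = HA − (HA*)* = HA − overline(AH), where overline(AH) is the closure of the operator AH defined on Dom H. -/

import Mathlib

open Filter Topology ContinuousLinearMap
open scoped InnerProductSpace

noncomputable section

namespace LiouvilleFormalization

variable {H : Type*} [NormedAddCommGroup H] [InnerProductSpace ℂ H] [CompleteSpace H]

/-- `A` is Hilbert–Schmidt with respect to the orthonormal basis `e`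
(equivalently, with respect to every orthonormal basis). -/
def IsHS (e : HilbertBasis ℕ ℂ H) (A : H →L[ℂ] H) : Prop :=
  Summable fun n => ‖A (e n)‖ ^ 2

/-- The Hilbert–Schmidt norm of `A` computed in the orthonormal basis `e`. -/
def hsNorm (e : HilbertBasis ℕ ℂ H) (A : H →L[ℂ] H) : ℝ :=
  Real.sqrt (∑' n, ‖A (e n)‖ ^ 2)

/-- The Hilbert–Schmidt inner product `⟨A, B⟩_HS = Σₙ ⟨A eₙ, B eₙ⟩`. -/
def hsInner (e : HilbertBasis ℕ ℂ H) (A B : H →L[ℂ] H) : ℂ :=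
  ∑' n, (inner ℂ (A (e n)) (B (e n)) : ℂ)

/-- The conjugation superoperator `A ↦ U(t) A U(t)*`. -/
def conjSup (U : ℝ → H →L[ℂ] H) (t : ℝ) (A : H →L[ℂ] H) : H →L[ℂ] H :=
  U t ∘L A ∘L adjoint (U t)

/-- `U` is a strongly continuous one-parameter unitary group. -/
structure IsUnitaryGroup (U : ℝ → H →L[ℂ] H) : Prop where
  map_zero : U 0 = 1
  map_add : ∀ t s : ℝ, U (t + s) = U t ∘L U s
  unitary_left : ∀ t : ℝ, adjoint (U t) ∘L U t = 1
  unitary_right : ∀ t : ℝ, U t ∘L adjoint (U t) = 1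
  strong_continuous : ∀ ψ : H, Continuous fun t : ℝ => U t ψ

/-- A densely defined operator is self-adjoint if it coincides with its adjoint. -/
def IsSelfAdjointOp (T : H →ₗ.[ℂ] H) : Prop :=
  Dense (T.domain : Set H) ∧ T.adjoint = T

/-- `T` is the infinitesimal generator of the unitary group `U`, i.e. `U(t) = e^{-itT}`:
the domain of `T` is exactly the set of vectors where the strong derivative at `t = 0`
exists, and there the derivative equals `-i T ψ`. -/
structure IsGenerator (U : ℝ → H →L[ℂ] H) (T : H →ₗ.[ℂ] H) : Prop where
  mem_dom : ∀ ψ : H,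
    ψ ∈ T.domain ↔ ∃ L : H, Tendsto (fun t : ℝ => t⁻¹ • (U t ψ - ψ)) (𝓝[≠] 0) (𝓝 L)
  deriv : ∀ ψ : T.domain,
    Tendsto (fun t : ℝ => t⁻¹ • (U t ψ - (ψ : H))) (𝓝[≠] 0) (𝓝 ((-Complex.I) • T ψ))

/-- `L = 𝐇 A`: membership of `A` in the domain of the Liouville superoperator `𝐇`
generated by `U`, together with the value `𝐇 A = L`: the difference quotient
`(U(t) A U(t)* - A)/t` converges in Hilbert–Schmidt norm to `-i L`. -/
def HasLiouville (e : HilbertBasis ℕ ℂ H) (U : ℝ → H →L[ℂ] H) (A L : H →L[ℂ] H) : Prop :=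
  IsHS e A ∧ IsHS e L ∧
    Tendsto (fun t : ℝ => hsNorm e (t⁻¹ • (conjSup U t A - A) - (-Complex.I) • L))
      (𝓝[≠] 0) (𝓝 0)

/-- The commutator `[T, A] ψ = T(Aψ) - A(Tψ)` on the domain of `T`, for `A` mapping
`Dom T` into itself. -/
def commAt (T : H →ₗ.[ℂ] H) (A : H →L[ℂ] H)
    (hm : ∀ x : T.domain, (A x : H) ∈ T.domain) (ψ : T.domain) : H :=
  T ⟨A ψ, hm ψ⟩ - A (T ψ)

open scoped ENNReal

variable (e : HilbertBasis ℕ ℂ H)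

lemma parseval (x : H) : HasSum (fun m => ‖(inner ℂ (e m) x : ℂ)‖ ^ 2) (‖x‖ ^ 2) := by
  have h := e.hasSum_inner_mul_inner x x
  have h2 : ∀ m, (inner ℂ x (e m) : ℂ) * inner ℂ (e m) x
      = ((‖(inner ℂ (e m) x : ℂ)‖ ^ 2 : ℝ) : ℂ) := by
    intro m
    rw [← inner_conj_symm (e m) x, RCLike.mul_conj, RCLike.norm_conj]
    norm_cast
  rw [inner_self_eq_norm_sq_to_K] at h
  simp only [h2] at h
  simpa [← Complex.ofReal_pow] using h.mapL Complex.reCLM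

lemma hs_adjoint {X : H →L[ℂ] H} (hX : IsHS e X) :
    IsHS e (adjoint X) ∧ hsNorm e (adjoint X) = hsNorm e X := by
  set a : ℕ × ℕ → ℝ := fun p => ‖(inner ℂ (e p.2) (X (e p.1)) : ℂ)‖ ^ 2 with ha_def
  set b : ℕ × ℕ → ℝ := fun p => ‖(inner ℂ (e p.2) ((adjoint X) (e p.1)) : ℂ)‖ ^ 2 with hb_def
  have ha : 0 ≤ a := fun p => by positivity
  have hb : 0 ≤ b := fun p => by positivity
  have hrow : ∀ n, HasSum (fun m => a (n, m)) (‖X (e n)‖ ^ 2) := fun n => parseval e (X (e n))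
  have hrow' : ∀ m, HasSum (fun n => b (m, n)) (‖(adjoint X) (e m)‖ ^ 2) :=
    fun m => parseval e ((adjoint X) (e m))
  have hab : ∀ p : ℕ × ℕ, a p = b p.swap := by
    rintro ⟨n, m⟩
    simp only [ha_def, hb_def, Prod.swap]
    rw [norm_inner_symm, ContinuousLinearMap.adjoint_inner_right]
  have hsa : Summable a := by
    refine (summable_prod_of_nonneg ha).mpr ⟨fun n => (hrow n).summable, ?_⟩
    have : (fun n => ∑' m, a (n, m)) = fun n => ‖X (e n)‖ ^ 2 :=
      funext fun n => (hrow n).tsum_eq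
    rw [this]; exact hX
  have hsb : Summable b := by
    rw [← (Equiv.prodComm ℕ ℕ).summable_iff]
    have : b ∘ (Equiv.prodComm ℕ ℕ) = a := funext fun p => (hab p).symm
    rwa [this]
  have hb2 := (summable_prod_of_nonneg hb).mp hsb
  have hAdj : IsHS e (adjoint X) := by
    have : (fun m => ∑' n, b (m, n)) = fun m => ‖(adjoint X) (e m)‖ ^ 2 :=
      funext fun m => (hrow' m).tsum_eq
    unfold IsHS; rw [← this]; exact hb2.2
  refine ⟨hAdj, ?_⟩
  unfold hsNorm
  congr 1
  calc ∑' m, ‖(adjoint X) (e m)‖ ^ 2 = ∑' m, ∑' n, b (m, n) := by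
        exact tsum_congr fun m => ((hrow' m).tsum_eq).symm
    _ = ∑' p, b p := (hsb.tsum_prod' fun m => (hrow' m).summable).symm
    _ = ∑' p, a p := by
        rw [← (Equiv.prodComm ℕ ℕ).tsum_eq b]
        exact tsum_congr fun p => (hab p).symm
    _ = ∑' n, ∑' m, a (n, m) := hsa.tsum_prod' fun n => (hrow n).summable
    _ = ∑' n, ‖X (e n)‖ ^ 2 := tsum_congr fun n => (hrow n).tsum_eq

lemma two_toReal : ((2 : ℝ≥0∞)).toReal = 2 := by norm_num

lemma rpow2 (x : ℝ) : x ^ ((2 : ℝ≥0∞)).toReal = x ^ 2 := by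
  rw [two_toReal, show (2:ℝ) = ((2:ℕ):ℝ) by norm_num, Real.rpow_natCast]

lemma isHS_iff_memℓp {X : H →L[ℂ] H} :
    IsHS e X ↔ Memℓp (fun n => X (e n)) (2 : ℝ≥0∞) := by
  rw [memℓp_gen_iff (by rw [two_toReal]; norm_num : 0 < ((2:ℝ≥0∞)).toReal)]
  constructor
  · intro h; exact h.congr fun b => (rpow2 _).symm
  · intro h; exact h.congr fun b => rpow2 _

lemma hsNorm_eq_lp_norm {X : H →L[ℂ] H} (hX : IsHS e X) :
    hsNorm e X = ‖(⟨fun n => X (e n), (isHS_iff_memℓp e).mp hX⟩ : lp (fun _ : ℕ => H) 2)‖ := by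
  rw [lp.norm_eq_tsum_rpow (by rw [two_toReal]; norm_num) _]
  unfold hsNorm
  simp only [rpow2, two_toReal]
  have hr : ∀ x : ℝ, x ^ (2:ℝ) = x ^ (2:ℕ) := fun x => by
    rw [show (2:ℝ) = ((2:ℕ):ℝ) by norm_num, Real.rpow_natCast]
  simp only [hr]
  rw [Real.sqrt_eq_rpow]

lemma hs_add {X Y : H →L[ℂ] H} (hX : IsHS e X) (hY : IsHS e Y) :
    IsHS e (X + Y) ∧ hsNorm e (X + Y) ≤ hsNorm e X + hsNorm e Y := by
  have hmX := (isHS_iff_memℓp e).mp hX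
  have hmY := (isHS_iff_memℓp e).mp hY
  have hmXY : Memℓp (fun n => (X + Y) (e n)) (2 : ℝ≥0∞) := by
    have heq : (fun n => (X + Y) (e n)) = (fun n => X (e n)) + (fun n => Y (e n)) :=
      funext fun n => rfl
    rw [heq]; exact hmX.add hmY
  have hXY : IsHS e (X + Y) := (isHS_iff_memℓp e).mpr hmXY
  refine ⟨hXY, ?_⟩
  rw [hsNorm_eq_lp_norm e hX, hsNorm_eq_lp_norm e hY, hsNorm_eq_lp_norm e hXY]
  have : (⟨fun n => (X + Y) (e n), hmXY⟩ : lp (fun _ : ℕ => H) 2)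
      = (⟨fun n => X (e n), hmX⟩ : lp (fun _ : ℕ => H) 2)
        + (⟨fun n => Y (e n), hmY⟩ : lp (fun _ : ℕ => H) 2) := by
    apply Subtype.ext
    rfl
  rw [this]
  exact norm_add_le _ _

section Group

variable {U : ℝ → H →L[ℂ] H} {T : H →ₗ.[ℂ] H}

lemma norm_U_apply (hU : IsUnitaryGroup U) (t : ℝ) (x : H) : ‖U t x‖ = ‖x‖ := by
  have h1 : adjoint (U t) (U t x) = x := by
    have := congrArg (fun X : H →L[ℂ] H => X x) (hU.unitary_left t)
    simpa using this
  have h2 : (inner ℂ (U t x) (U t x) : ℂ) = inner ℂ x x := by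
    rw [← ContinuousLinearMap.adjoint_inner_left (U t) x (U t x), h1]
  have h3 : ‖U t x‖ ^ 2 = ‖x‖ ^ 2 := by
    rw [← inner_self_eq_norm_sq (𝕜 := ℂ), ← inner_self_eq_norm_sq (𝕜 := ℂ), h2]
  calc ‖U t x‖ = Real.sqrt (‖U t x‖ ^ 2) := (Real.sqrt_sq (norm_nonneg _)).symm
    _ = Real.sqrt (‖x‖ ^ 2) := by rw [h3]
    _ = ‖x‖ := Real.sqrt_sq (norm_nonneg _)

lemma adjoint_U (hU : IsUnitaryGroup U) (t : ℝ) : adjoint (U t) = U (-t) := by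
  have h1 : U t ∘L U (-t) = 1 := by rw [← hU.map_add]; simp [hU.map_zero]
  ext x
  have h2 := congrArg (fun X : H →L[ℂ] H => X (U (-t) x)) (hU.unitary_left t)
  have h3 := congrArg (fun X : H →L[ℂ] H => X x) h1
  simp only [ContinuousLinearMap.comp_apply, ContinuousLinearMap.one_apply] at h2 h3
  rw [h3] at h2
  exact h2

lemma U_zero_apply (hU : IsUnitaryGroup U) (x : H) : U 0 x = x := by
  rw [hU.map_zero]; rfl

lemma hasDerivAt_U (hU : IsUnitaryGroup U) (hgen : IsGenerator U T) (ψ : T.domain) (s : ℝ) :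
    HasDerivAt (fun r => U r (ψ : H)) ((-Complex.I) • U s (T ψ)) s := by
  rw [hasDerivAt_iff_tendsto_slope]
  have hmap : Tendsto (fun y : ℝ => y - s) (𝓝[≠] s) (𝓝[≠] 0) := by
    apply tendsto_nhdsWithin_of_tendsto_nhds_of_eventually_within
    · exact ((continuous_id.sub continuous_const).tendsto' s 0 (by simp)).mono_left
        nhdsWithin_le_nhds
    · filter_upwards [self_mem_nhdsWithin] with y hy
      simp only [Set.mem_compl_iff, Set.mem_singleton_iff] at hy ⊢
      exact sub_ne_zero.mpr hy
  have key : ∀ y : ℝ, slope (fun r => U r (ψ : H)) s y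
      = U s ((y - s)⁻¹ • (U (y - s) (ψ : H) - (ψ : H))) := by
    intro y
    rw [slope_def_module]
    have hy : U y = U s ∘L U (y - s) := by rw [← hU.map_add]; congr 1; ring
    rw [hy]
    simp [map_sub, ContinuousLinearMap.map_smul_of_tower]
  have lim : Tendsto (fun y : ℝ => U s ((y - s)⁻¹ • (U (y - s) (ψ : H) - (ψ : H))))
      (𝓝[≠] s) (𝓝 (U s ((-Complex.I) • T ψ))) :=
    ((U s).continuous.tendsto _).comp ((hgen.deriv ψ).comp hmap)
  have : U s ((-Complex.I) • T ψ) = (-Complex.I) • U s (T ψ) := map_smul _ _ _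
  rw [this] at lim
  exact lim.congr fun y => (key y).symm

lemma norm_U_sub_le (hU : IsUnitaryGroup U) (hgen : IsGenerator U T) (ψ : T.domain) (t : ℝ) :
    ‖U t (ψ : H) - (ψ : H)‖ ≤ ‖T ψ‖ * |t| := by
  have hb : ∀ x ∈ (Set.univ : Set ℝ),
      ‖(-Complex.I) • U x (T ψ)‖ ≤ ‖T ψ‖ := by
    intro x _
    rw [norm_smul]
    simp [norm_U_apply hU]
  have := Convex.norm_image_sub_le_of_norm_hasDerivWithin_le
    (f := fun r => U r (ψ : H)) (f' := fun x => (-Complex.I) • U x (T ψ)) (s := Set.univ)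
    (fun x _ => (hasDerivAt_U hU hgen ψ x).hasDerivWithinAt) hb convex_univ
    (Set.mem_univ 0) (Set.mem_univ t)
  simpa [U_zero_apply hU, Real.norm_eq_abs] using this

lemma quot_bound (hU : IsUnitaryGroup U) (hgen : IsGenerator U T) (ψ : T.domain)
    {t : ℝ} (ht : t ≠ 0) : ‖t⁻¹ • (U t (ψ : H) - (ψ : H))‖ ≤ ‖T ψ‖ := by
  rw [norm_smul, Real.norm_eq_abs, abs_inv]
  have h := norm_U_sub_le hU hgen ψ t
  have h2 : |t| > 0 := abs_pos.mpr ht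
  rw [inv_mul_le_iff₀ h2]
  calc ‖U t (ψ : H) - (ψ : H)‖ ≤ ‖T ψ‖ * |t| := h
    _ = |t| * ‖T ψ‖ := mul_comm _ _

lemma real_smul_op (r : ℝ) (X : H →L[ℂ] H) : r • X = (r : ℂ) • X := by
  ext x; simp

lemma real_smul_vec (r : ℝ) (x : H) : r • x = (r : ℂ) • x := by simp

lemma hs_of_bound {X : H →L[ℂ] H} {g : ℕ → ℝ} (hg : Summable fun n => g n ^ 2)
    (hb : ∀ n, ‖X (e n)‖ ≤ g n) : IsHS e X := by
  refine Summable.of_nonneg_of_le (fun n => by positivity) (fun n => ?_) hg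
  exact pow_le_pow_left₀ (norm_nonneg _) (hb n) 2

lemma hs_comp_left {X : H →L[ℂ] H} (hU : IsUnitaryGroup U) (t : ℝ) (hX : IsHS e X) :
    IsHS e (U t ∘L X) ∧ hsNorm e (U t ∘L X) = hsNorm e X := by
  have hcol : ∀ n, ‖(U t ∘L X) (e n)‖ = ‖X (e n)‖ := fun n => norm_U_apply hU t (X (e n))
  constructor
  · exact hX.congr fun n => by rw [hcol n]
  · unfold hsNorm; congr 1; exact tsum_congr fun n => by rw [hcol n]

lemma hs_comp_right {X : H →L[ℂ] H} (hU : IsUnitaryGroup U) (t : ℝ) (hX : IsHS e X) :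
    IsHS e (X ∘L U t) ∧ hsNorm e (X ∘L U t) = hsNorm e X := by
  have h1 := hs_adjoint e hX
  have h2 := hs_comp_left e hU (-t) h1.1
  have h3 := hs_adjoint e h2.1
  have h5 : adjoint (U (-t) ∘L adjoint X) = X ∘L U t := by
    rw [ContinuousLinearMap.adjoint_comp, ContinuousLinearMap.adjoint_adjoint,
      adjoint_U hU, neg_neg]
  rw [h5] at h3
  exact ⟨h3.1, by rw [h3.2, h2.2, h1.2]⟩

lemma hsNorm_tendsto_zero {F : ℝ → H →L[ℂ] H} {g : ℕ → ℝ}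
    (hg : Summable fun n => g n ^ 2)
    (hbound : ∀ᶠ t in (𝓝[≠] (0:ℝ)), ∀ n, ‖F t (e n)‖ ≤ g n)
    (hlim : ∀ n, Tendsto (fun t => F t (e n)) (𝓝[≠] (0:ℝ)) (𝓝 0)) :
    Tendsto (fun t => hsNorm e (F t)) (𝓝[≠] (0:ℝ)) (𝓝 0) := by
  have h1 : Tendsto (fun t => ∑' n, ‖F t (e n)‖ ^ 2) (𝓝[≠] (0:ℝ)) (𝓝 (∑' _ : ℕ, (0:ℝ))) := by
    apply tendsto_tsum_of_dominated_convergence hg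
    · intro n
      have hn := (hlim n).norm
      simp only [norm_zero] at hn
      simpa using hn.pow 2
    · filter_upwards [hbound] with t ht n
      have h0 : (0:ℝ) ≤ ‖F t (e n)‖ := norm_nonneg _
      have h2 := ht n
      rw [Real.norm_eq_abs, abs_of_nonneg (by positivity)]
      nlinarith
  rw [tsum_zero] at h1
  have h2 : Tendsto Real.sqrt (𝓝 0) (𝓝 0) := by
    simpa using (Real.continuous_sqrt.tendsto 0)
  exact h2.comp h1

lemma symm_of_selfAdjoint {T : H →ₗ.[ℂ] H} (hT : IsSelfAdjointOp T) (ψ φ : T.domain) :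
    (inner ℂ (T ψ) (φ : H) : ℂ) = inner ℂ (ψ : H) (T φ) := by
  obtain ⟨deq, feq⟩ := LinearPMap.ext_iff.mp hT.2
  have hmem : (ψ : H) ∈ T.adjoint.domain := by rw [deq]; exact ψ.2
  have h1 : T.adjoint ⟨(ψ : H), hmem⟩ = T ψ := feq (x := (ψ : H)) (hf := hmem) (hg := ψ.2)
  have h2 := LinearPMap.adjoint_isFormalAdjoint hT.1 ⟨(ψ : H), hmem⟩ φ
  rw [h1] at h2
  exact h2

end Group

set_option maxHeartbeats 1000000 in
/-- if `A` is Hilbert–Schmidt, maps `ℋ` into `Dom H`, and both `HA = B` and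
`HA* = B'` are everywhere defined Hilbert–Schmidt operators, then `A ∈ Dom 𝐇` with
`𝐇A = HA − (HA*)* = HA − overline(AH)`: the limit defining `𝐇A` equals `B − (B')*`, and
`(B')*` coincides with the closure of `AH` (any continuous operator agreeing with `AH` on
`Dom H`). -/
theorem statement12 (e : HilbertBasis ℕ ℂ H) (T : H →ₗ.[ℂ] H) (hT : IsSelfAdjointOp T)
    (U : ℝ → H →L[ℂ] H) (hU : IsUnitaryGroup U) (hgen : IsGenerator U T)
    (A : H →L[ℂ] H) (hA : IsHS e A)
    (h : ∀ φ : H, A φ ∈ T.domain) (h' : ∀ φ : H, adjoint A φ ∈ T.domain)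
    (B B' : H →L[ℂ] H) (hBHS : IsHS e B) (hB'HS : IsHS e B')
    (hB : ∀ φ : H, B φ = T ⟨A φ, h φ⟩) (hB' : ∀ φ : H, B' φ = T ⟨adjoint A φ, h' φ⟩) :
    HasLiouville e U A (B - adjoint B') ∧
    ∀ C : H →L[ℂ] H, (∀ ψ : T.domain, C ψ = A (T ψ)) → adjoint B' = C := by
  have hd : Dense (T.domain : Set H) := hT.1
  -- the adjoint of B' agrees with A ∘ T on the domain of T
  have hadjB' : ∀ ψ : T.domain, adjoint B' (ψ : H) = A (T ψ) := by
    intro ψ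
    apply ext_inner_right ℂ
    intro φ
    rw [ContinuousLinearMap.adjoint_inner_left, hB' φ,
      ← symm_of_selfAdjoint hT ψ ⟨adjoint A φ, h' φ⟩]
    exact ContinuousLinearMap.adjoint_inner_right A (T ψ) φ
  have huniq : ∀ C : H →L[ℂ] H, (∀ ψ : T.domain, C ψ = A (T ψ)) → adjoint B' = C := by
    intro C hC
    have heq : Set.EqOn (⇑(adjoint B')) (⇑C) (T.domain : Set H) := by
      intro x hx
      rw [show (x : H) = ((⟨x, hx⟩ : T.domain) : H) from rfl, hadjB' ⟨x, hx⟩, hC ⟨x, hx⟩]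
    have hfe := Continuous.ext_on hd (adjoint B').continuous C.continuous heq
    ext x
    exact congrFun hfe x
  -- Hilbert-Schmidt facts
  have hBadjHS : IsHS e (adjoint B) := (hs_adjoint e hBHS).1
  have hAadjHS : IsHS e (adjoint A) := (hs_adjoint e hA).1
  have hB'adjHS : IsHS e (adjoint B') := (hs_adjoint e hB'HS).1
  have hL : IsHS e (B - adjoint B') := by
    refine hs_of_bound e (g := fun n => ‖B (e n)‖ + ‖adjoint B' (e n)‖) ?_ ?_
    · refine Summable.of_nonneg_of_le (fun n => by positivity) (fun n => ?_)
        ((hBHS.add hB'adjHS).mul_left 2)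
      nlinarith [sq_nonneg (‖B (e n)‖ - ‖adjoint B' (e n)‖), norm_nonneg (B (e n)),
        norm_nonneg (adjoint B' (e n))]
    · intro n
      simpa using norm_sub_le (B (e n)) (adjoint B' (e n))
  refine ⟨⟨hA, hL, ?_⟩, huniq⟩
  -- the three pieces
  set R : ℝ → (H →L[ℂ] H) := fun t => t⁻¹ • (U t ∘L A - A) + Complex.I • B with hRdef
  set Q₂ : ℝ → (H →L[ℂ] H) := fun t => (-Complex.I) • (adjoint B - U t ∘L adjoint B) with hQ₂def
  set Q₃ : ℝ → (H →L[ℂ] H) :=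
    fun t => t⁻¹ • (U t ∘L adjoint A - adjoint A) + Complex.I • B' with hQ₃def
  have adjQ₂ : ∀ t : ℝ, adjoint (Q₂ t) = Complex.I • (B - B ∘L U (-t)) := by
    intro t
    simp only [hQ₂def]
    rw [← ContinuousLinearMap.star_eq_adjoint, star_smul, star_sub,
      show U t ∘L adjoint B = U t * adjoint B from rfl, star_mul]
    simp only [ContinuousLinearMap.star_eq_adjoint, ContinuousLinearMap.adjoint_adjoint,
      adjoint_U hU, star_neg, RCLike.star_def, Complex.conj_I, neg_neg]
    rfl
  have adjQ₃ : ∀ t : ℝ, adjoint (Q₃ t)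
      = t⁻¹ • (A ∘L U (-t) - A) - Complex.I • adjoint B' := by
    intro t
    simp only [hQ₃def]
    rw [real_smul_op, real_smul_op]
    rw [← ContinuousLinearMap.star_eq_adjoint, star_add, star_smul, star_smul, star_sub,
      show U t ∘L adjoint A = U t * adjoint A from rfl, star_mul]
    simp only [ContinuousLinearMap.star_eq_adjoint, ContinuousLinearMap.adjoint_adjoint,
      adjoint_U hU, RCLike.star_def, Complex.conj_ofReal, Complex.conj_I]
    rw [neg_smul, ← sub_eq_add_neg]
    rfl
  -- decomposition of the difference quotient
  have hsplit : ∀ t : ℝ, t ≠ 0 →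
      t⁻¹ • (conjSup U t A - A) - (-Complex.I) • (B - adjoint B')
        = (R t ∘L U (-t)) + (adjoint (Q₂ t) + adjoint (Q₃ t)) := by
    intro t ht
    rw [adjQ₂ t, adjQ₃ t]
    ext x
    simp only [hRdef, conjSup, adjoint_U hU, ContinuousLinearMap.add_apply,
      ContinuousLinearMap.sub_apply, ContinuousLinearMap.smul_apply,
      ContinuousLinearMap.comp_apply, ContinuousLinearMap.coe_comp', Function.comp_apply,
      real_smul_vec]
    module
  -- summable bounds
  have hgB : Summable (fun n => (2 * ‖B (e n)‖) ^ 2) :=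
    (hBHS.mul_left 4).congr fun n => by ring
  have hgBadj : Summable (fun n => (2 * ‖adjoint B (e n)‖) ^ 2) :=
    (hBadjHS.mul_left 4).congr fun n => by ring
  have hgB' : Summable (fun n => (2 * ‖B' (e n)‖) ^ 2) :=
    (hB'HS.mul_left 4).congr fun n => by ring
  -- column limits
  have hlimR : ∀ n, Tendsto (fun t => R t (e n)) (𝓝[≠] (0:ℝ)) (𝓝 0) := by
    intro n
    have h₁ := hgen.deriv ⟨A (e n), h (e n)⟩
    rw [show T ⟨A (e n), h (e n)⟩ = B (e n) from (hB (e n)).symm] at h₁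
    have h₂ : Tendsto (fun t : ℝ => t⁻¹ • (U t (A (e n)) - A (e n)) + Complex.I • B (e n))
        (𝓝[≠] (0:ℝ)) (𝓝 ((-Complex.I) • B (e n) + Complex.I • B (e n))) :=
      h₁.add tendsto_const_nhds
    rw [show (-Complex.I) • B (e n) + Complex.I • B (e n) = 0 by
      rw [neg_smul, neg_add_cancel]] at h₂
    refine h₂.congr fun t => ?_
    simp [hRdef]
  have hlimQ₂ : ∀ n, Tendsto (fun t => Q₂ t (e n)) (𝓝[≠] (0:ℝ)) (𝓝 0) := by
    intro n
    have hc : Tendsto (fun t : ℝ => U t (adjoint B (e n))) (𝓝 (0:ℝ))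
        (𝓝 (adjoint B (e n))) := by
      have := (hU.strong_continuous (adjoint B (e n))).tendsto 0
      rwa [U_zero_apply hU] at this
    have h₂ : Tendsto
        (fun t : ℝ => (-Complex.I) • (adjoint B (e n) - U t (adjoint B (e n))))
        (𝓝 (0:ℝ)) (𝓝 ((-Complex.I) • (adjoint B (e n) - adjoint B (e n)))) :=
      (tendsto_const_nhds.sub hc).const_smul (-Complex.I)
    rw [sub_self, smul_zero] at h₂
    exact (h₂.mono_left nhdsWithin_le_nhds).congr fun t => by simp [hQ₂def]
  have hlimQ₃ : ∀ n, Tendsto (fun t => Q₃ t (e n)) (𝓝[≠] (0:ℝ)) (𝓝 0) := by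
    intro n
    have h₁ := hgen.deriv ⟨adjoint A (e n), h' (e n)⟩
    rw [show T ⟨adjoint A (e n), h' (e n)⟩ = B' (e n) from (hB' (e n)).symm] at h₁
    have h₂ : Tendsto
        (fun t : ℝ => t⁻¹ • (U t (adjoint A (e n)) - adjoint A (e n)) + Complex.I • B' (e n))
        (𝓝[≠] (0:ℝ)) (𝓝 ((-Complex.I) • B' (e n) + Complex.I • B' (e n))) :=
      h₁.add tendsto_const_nhds
    rw [show (-Complex.I) • B' (e n) + Complex.I • B' (e n) = 0 by
      rw [neg_smul, neg_add_cancel]] at h₂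
    refine h₂.congr fun t => ?_
    simp [hQ₃def]
  -- column bounds
  have hbR : ∀ᶠ t in 𝓝[≠] (0:ℝ), ∀ n, ‖R t (e n)‖ ≤ 2 * ‖B (e n)‖ := by
    filter_upwards [self_mem_nhdsWithin] with t ht n
    have ht' : (t:ℝ) ≠ 0 := ht
    have hq := quot_bound hU hgen ⟨A (e n), h (e n)⟩ ht'
    rw [show T ⟨A (e n), h (e n)⟩ = B (e n) from (hB (e n)).symm] at hq
    have hx : R t (e n) = t⁻¹ • (U t (A (e n)) - A (e n)) + Complex.I • B (e n) := by
      simp [hRdef]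
    rw [hx]
    have h2 : ‖Complex.I • B (e n)‖ = ‖B (e n)‖ := by
      rw [norm_smul, Complex.norm_I, one_mul]
    calc ‖t⁻¹ • (U t (A (e n)) - A (e n)) + Complex.I • B (e n)‖
        ≤ ‖t⁻¹ • (U t (A (e n)) - A (e n))‖ + ‖Complex.I • B (e n)‖ := norm_add_le _ _
      _ ≤ ‖B (e n)‖ + ‖B (e n)‖ := add_le_add hq (le_of_eq h2)
      _ = 2 * ‖B (e n)‖ := by ring
  have hbQ₂ : ∀ᶠ t in 𝓝[≠] (0:ℝ), ∀ n, ‖Q₂ t (e n)‖ ≤ 2 * ‖adjoint B (e n)‖ := by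
    filter_upwards with t n
    have hx : Q₂ t (e n)
        = (-Complex.I) • (adjoint B (e n) - U t (adjoint B (e n))) := by simp [hQ₂def]
    rw [hx, norm_smul]
    simp only [norm_neg, Complex.norm_I, one_mul]
    calc ‖adjoint B (e n) - U t (adjoint B (e n))‖
        ≤ ‖adjoint B (e n)‖ + ‖U t (adjoint B (e n))‖ := norm_sub_le _ _
      _ = 2 * ‖adjoint B (e n)‖ := by rw [norm_U_apply hU]; ring
  have hbQ₃ : ∀ᶠ t in 𝓝[≠] (0:ℝ), ∀ n, ‖Q₃ t (e n)‖ ≤ 2 * ‖B' (e n)‖ := by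
    filter_upwards [self_mem_nhdsWithin] with t ht n
    have ht' : (t:ℝ) ≠ 0 := ht
    have hq := quot_bound hU hgen ⟨adjoint A (e n), h' (e n)⟩ ht'
    rw [show T ⟨adjoint A (e n), h' (e n)⟩ = B' (e n) from (hB' (e n)).symm] at hq
    have hx : Q₃ t (e n)
        = t⁻¹ • (U t (adjoint A (e n)) - adjoint A (e n)) + Complex.I • B' (e n) := by
      simp [hQ₃def]
    rw [hx]
    have h2 : ‖Complex.I • B' (e n)‖ = ‖B' (e n)‖ := by
      rw [norm_smul, Complex.norm_I, one_mul]
    calc ‖t⁻¹ • (U t (adjoint A (e n)) - adjoint A (e n)) + Complex.I • B' (e n)‖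
        ≤ ‖t⁻¹ • (U t (adjoint A (e n)) - adjoint A (e n))‖ + ‖Complex.I • B' (e n)‖ :=
          norm_add_le _ _
      _ ≤ ‖B' (e n)‖ + ‖B' (e n)‖ := add_le_add hq (le_of_eq h2)
      _ = 2 * ‖B' (e n)‖ := by ring
  -- HS-norm limits
  have limR := hsNorm_tendsto_zero e hgB hbR hlimR
  have limQ₂ := hsNorm_tendsto_zero e hgBadj hbQ₂ hlimQ₂
  have limQ₃ := hsNorm_tendsto_zero e hgB' hbQ₃ hlimQ₃
  have hsum : Tendsto (fun t => hsNorm e (R t) + (hsNorm e (Q₂ t) + hsNorm e (Q₃ t)))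
      (𝓝[≠] (0:ℝ)) (𝓝 0) := by
    simpa using limR.add (limQ₂.add limQ₃)
  -- squeeze
  apply squeeze_zero' (g := fun t => hsNorm e (R t) + (hsNorm e (Q₂ t) + hsNorm e (Q₃ t)))
  · filter_upwards with t
    exact Real.sqrt_nonneg _
  · filter_upwards [self_mem_nhdsWithin, hbR, hbQ₂, hbQ₃] with t ht hb1 hb2 hb3
    have ht' : (t:ℝ) ≠ 0 := ht
    rw [hsplit t ht']
    have hRHS : IsHS e (R t) := hs_of_bound e hgB hb1
    have h1 := hs_comp_right e hU (-t) hRHS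
    have hQ₂HS : IsHS e (Q₂ t) := hs_of_bound e hgBadj hb2
    have h2 := hs_adjoint e hQ₂HS
    have hQ₃HS : IsHS e (Q₃ t) := hs_of_bound e hgB' hb3
    have h3 := hs_adjoint e hQ₃HS
    have hadd2 := hs_add e h2.1 h3.1
    have hadd1 := hs_add e h1.1 hadd2.1
    calc hsNorm e ((R t ∘L U (-t)) + (adjoint (Q₂ t) + adjoint (Q₃ t)))
        ≤ hsNorm e (R t ∘L U (-t)) + hsNorm e (adjoint (Q₂ t) + adjoint (Q₃ t)) := hadd1.2
      _ ≤ hsNorm e (R t ∘L U (-t))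
          + (hsNorm e (adjoint (Q₂ t)) + hsNorm e (adjoint (Q₃ t))) := by
          linarith [hadd2.2]
      _ = hsNorm e (R t) + (hsNorm e (Q₂ t) + hsNorm e (Q₃ t)) := by
          rw [h1.2, h2.2, h3.2]
  · exact hsum

end LiouvilleFormalization
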